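/- If M, N are nonzero bounded operators with M normal, N² = 0, and ‖N‖ ≤ ‖M‖, then T = M ⊕ N is normaloid (‖T^n‖ = ‖T‖^n for all n ≥ 1), T^n is normal for all n ≥ 2, but T is not normal. -/

import Mathlib

open ContinuousLinearMap

noncomputable section
namespace Stmt18Aux
set_option linter.unusedSectionVars false
variable {H : Type*} [NormedAddCommGroup H] [InnerProductSpace ℂ H] [CompleteSpace H]

def D (A B : H →L[ℂ] H) : WithLp 2 (H × H) →L[ℂ] WithLp 2 (H × H) :=
  ((WithLp.prodContinuousLinearEquiv 2 ℂ H H).symm.toContinuousLinearMap).comp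
    ((A.prodMap B).comp (WithLp.prodContinuousLinearEquiv 2 ℂ H H).toContinuousLinearMap)

lemma D_apply (A B : H →L[ℂ] H) (p : WithLp 2 (H × H)) :
    D A B p = (WithLp.equiv 2 (H × H)).symm (A p.fst, B p.snd) := rfl

lemma norm_symm_pair (x y : H) :
    ‖(WithLp.equiv 2 (H × H)).symm (x, y)‖ ^ 2 = ‖x‖ ^ 2 + ‖y‖ ^ 2 := by
  rw [WithLp.prod_norm_sq_eq_of_L2]; rfl

lemma norm_symm_left (x : H) : ‖(WithLp.equiv 2 (H × H)).symm (x, 0)‖ = ‖x‖ := by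
  have h := norm_symm_pair x (0 : H)
  rw [← Real.sqrt_sq (norm_nonneg ((WithLp.equiv 2 (H × H)).symm (x, 0))), h]
  simp [Real.sqrt_sq (norm_nonneg x)]

lemma norm_symm_right (y : H) : ‖(WithLp.equiv 2 (H × H)).symm (0, y)‖ = ‖y‖ := by
  have h := norm_symm_pair (0 : H) y
  rw [← Real.sqrt_sq (norm_nonneg ((WithLp.equiv 2 (H × H)).symm (0, y))), h]
  simp [Real.sqrt_sq (norm_nonneg y)]

lemma D_norm (A B : H →L[ℂ] H) : ‖D A B‖ = max ‖A‖ ‖B‖ := by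
  apply le_antisymm
  · apply opNorm_le_bound _ (le_max_of_le_left (norm_nonneg A))
    intro p
    have h1 : ‖D A B p‖ ^ 2 ≤ (max ‖A‖ ‖B‖ * ‖p‖) ^ 2 := by
      rw [D_apply, norm_symm_pair, mul_pow, WithLp.prod_norm_sq_eq_of_L2, mul_add]
      gcongr
      · calc ‖A p.fst‖ ^ 2 ≤ (‖A‖ * ‖p.fst‖) ^ 2 := by gcongr; exact le_opNorm A p.fst
          _ ≤ (max ‖A‖ ‖B‖) ^ 2 * ‖p.fst‖ ^ 2 := by
              rw [mul_pow]
              exact mul_le_mul_of_nonneg_right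
                (pow_le_pow_left₀ (norm_nonneg _) (le_max_left _ _) 2) (by positivity)
      · calc ‖B p.snd‖ ^ 2 ≤ (‖B‖ * ‖p.snd‖) ^ 2 := by gcongr; exact le_opNorm B p.snd
          _ ≤ (max ‖A‖ ‖B‖) ^ 2 * ‖p.snd‖ ^ 2 := by
              rw [mul_pow]
              exact mul_le_mul_of_nonneg_right
                (pow_le_pow_left₀ (norm_nonneg _) (le_max_right _ _) 2) (by positivity)
    have h2 := Real.sqrt_le_sqrt h1
    rwa [Real.sqrt_sq (norm_nonneg _), Real.sqrt_sq (by positivity)] at h2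
  · apply max_le
    · apply opNorm_le_bound _ (norm_nonneg _)
      intro x
      have h0 : D A B ((WithLp.equiv 2 (H × H)).symm (x, 0)) =
          (WithLp.equiv 2 (H × H)).symm (A x, 0) := by
        rw [D_apply]; simp
      calc ‖A x‖ = ‖D A B ((WithLp.equiv 2 (H × H)).symm (x, 0))‖ := by rw [h0, norm_symm_left]
        _ ≤ ‖D A B‖ * ‖(WithLp.equiv 2 (H × H)).symm (x, 0)‖ := le_opNorm _ _
        _ = ‖D A B‖ * ‖x‖ := by rw [norm_symm_left]
    · apply opNorm_le_bound _ (norm_nonneg _)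
      intro y
      have h0 : D A B ((WithLp.equiv 2 (H × H)).symm (0, y)) =
          (WithLp.equiv 2 (H × H)).symm (0, B y) := by
        rw [D_apply]; simp
      calc ‖B y‖ = ‖D A B ((WithLp.equiv 2 (H × H)).symm (0, y))‖ := by rw [h0, norm_symm_right]
        _ ≤ ‖D A B‖ * ‖(WithLp.equiv 2 (H × H)).symm (0, y)‖ := le_opNorm _ _
        _ = ‖D A B‖ * ‖y‖ := by rw [norm_symm_right]

lemma norm_sq_of_normal (A : H →L[ℂ] H) (h : star A * A = A * star A) :
    ‖A ^ 2‖ = ‖A‖ ^ 2 := by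
  have key : star (A ^ 2) * A ^ 2 = star (star A * A) * (star A * A) := by
    calc star (A ^ 2) * A ^ 2 = star A * (star A * A) * A := by
          rw [star_pow, pow_two, pow_two]; noncomm_ring
      _ = star A * (A * star A) * A := by rw [h]
      _ = star (star A * A) * (star A * A) := by
          rw [star_mul, star_star]; noncomm_ring
  have h1 : ‖A ^ 2‖ * ‖A ^ 2‖ = (‖A‖ * ‖A‖) * (‖A‖ * ‖A‖) := by
    rw [← CStarRing.norm_star_mul_self (x := A ^ 2), key,
      CStarRing.norm_star_mul_self (x := star A * A), CStarRing.norm_star_mul_self (x := A)]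
  have h2 : ‖A ^ 2‖ ^ 2 = (‖A‖ ^ 2) ^ 2 := by ring_nf; ring_nf at h1; linarith
  rw [← Real.sqrt_sq (norm_nonneg (A ^ 2)), h2, Real.sqrt_sq (by positivity)]

lemma normal_pow (A : H →L[ℂ] H) (h : star A * A = A * star A) (n : ℕ) :
    star (A ^ n) * A ^ n = A ^ n * star (A ^ n) := by
  rw [star_pow]
  exact (Commute.pow_pow h n n)

lemma norm_two_pow_of_normal (A : H →L[ℂ] H) (h : star A * A = A * star A) (k : ℕ) :
    ‖A ^ 2 ^ k‖ = ‖A‖ ^ 2 ^ k := by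
  induction k with
  | zero => simp
  | succ k ih =>
    rw [pow_succ, pow_mul, norm_sq_of_normal _ (normal_pow A h _), ih, ← pow_mul, ← pow_succ]

lemma norm_pow_of_normal (A : H →L[ℂ] H) (h : star A * A = A * star A) (n : ℕ) (hn : 1 ≤ n) :
    ‖A ^ n‖ = ‖A‖ ^ n := by
  rcases eq_or_ne A 0 with rfl | hA
  · simp [zero_pow (show n ≠ 0 by omega)]
  · have hApos : (0 : ℝ) < ‖A‖ := norm_pos_iff.mpr hA
    refine le_antisymm (norm_pow_le' A (by omega)) ?_
    have hlt : n < 2 ^ n := Nat.lt_two_pow_self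
    have hsplit : A ^ 2 ^ n = A ^ n * A ^ (2 ^ n - n) := by
      rw [← pow_add]; congr 1; omega
    have hb : ‖A ^ 2 ^ n‖ ≤ ‖A ^ n‖ * ‖A‖ ^ (2 ^ n - n) := by
      rw [hsplit]
      calc ‖A ^ n * A ^ (2 ^ n - n)‖ ≤ ‖A ^ n‖ * ‖A ^ (2 ^ n - n)‖ := norm_mul_le _ _
        _ ≤ ‖A ^ n‖ * ‖A‖ ^ (2 ^ n - n) :=
            mul_le_mul_of_nonneg_left (norm_pow_le' A (by omega)) (norm_nonneg _)
    rw [norm_two_pow_of_normal A h n] at hb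
    have heq : ‖A‖ ^ 2 ^ n = ‖A‖ ^ n * ‖A‖ ^ (2 ^ n - n) := by
      rw [← pow_add]; congr 1; omega
    rw [heq] at hb
    exact le_of_mul_le_mul_right hb (by positivity)

lemma D_mul (A B A' B' : H →L[ℂ] H) : D A B * D A' B' = D (A * A') (B * B') := rfl

lemma D_pow (A B : H →L[ℂ] H) (n : ℕ) (hn : 1 ≤ n) : D A B ^ n = D (A ^ n) (B ^ n) := by
  induction n with
  | zero => omega
  | succ k ih =>
    rcases Nat.eq_or_lt_of_le hn with h | h
    · simp [← h]
    · rw [pow_succ, ih (by omega), D_mul, ← pow_succ, ← pow_succ]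

lemma D_adjoint (A B : H →L[ℂ] H) : adjoint (D A B) = D (adjoint A) (adjoint B) := by
  symm
  rw [eq_adjoint_iff]
  intro x y
  simp [D_apply, WithLp.prod_inner_apply, adjoint_inner_left]

end Stmt18Aux
end

open Stmt18Aux ContinuousLinearMap in
theorem stmt_18 {H : Type*} [NormedAddCommGroup H] [InnerProductSpace ℂ H] [CompleteSpace H]
    (M N : H →L[ℂ] H) (hM0 : M ≠ 0) (hN0 : N ≠ 0)
    (hM : ContinuousLinearMap.adjoint M * M = M * ContinuousLinearMap.adjoint M)
    (hN : N ^ 2 = 0) (hMN : ‖N‖ ≤ ‖M‖)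
    (T : WithLp 2 (H × H) →L[ℂ] WithLp 2 (H × H))
    (hT : ∀ p : WithLp 2 (H × H),
      WithLp.equiv 2 (H × H) (T p) =
        (M (WithLp.equiv 2 (H × H) p).1, N (WithLp.equiv 2 (H × H) p).2)) :
    (∀ n : ℕ, 1 ≤ n → ‖T ^ n‖ = ‖T‖ ^ n) ∧
      (∀ n : ℕ, 2 ≤ n →
        ContinuousLinearMap.adjoint (T ^ n) * T ^ n = T ^ n * ContinuousLinearMap.adjoint (T ^ n)) ∧
      ContinuousLinearMap.adjoint T * T ≠ T * ContinuousLinearMap.adjoint T := by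
  have hM' : star M * M = M * star M := by rw [star_eq_adjoint]; exact hM
  have hTD : T = D M N := by
    ext p
    apply (WithLp.equiv 2 (H × H)).injective
    rw [hT p, D_apply]
    simp
  have hnormM : ∀ n : ℕ, 1 ≤ n → ‖M ^ n‖ = ‖M‖ ^ n := fun n hn =>
    norm_pow_of_normal M hM' n hn
  have hTnorm : ‖T‖ = ‖M‖ := by rw [hTD, D_norm, max_eq_left hMN]
  refine ⟨?_, ?_, ?_⟩
  · intro n hn
    rw [hTnorm, hTD, D_pow M N n hn, D_norm, max_eq_left, hnormM n hn]
    calc ‖N ^ n‖ ≤ ‖N‖ ^ n := norm_pow_le' N (by omega)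
      _ ≤ ‖M‖ ^ n := pow_le_pow_left₀ (norm_nonneg N) hMN n
      _ = ‖M ^ n‖ := (hnormM n hn).symm
  · intro n hn
    have hNn : N ^ n = 0 := by
      have h : N ^ n = N ^ 2 * N ^ (n - 2) := by rw [← pow_add]; congr 1; omega
      rw [h, hN, zero_mul]
    rw [hTD, D_pow M N n (by omega), D_adjoint, D_mul, D_mul, hNn]
    congr 1
    · rw [← star_eq_adjoint]
      exact normal_pow M hM' n
    · simp
  · intro hcontra
    rw [hTD, D_adjoint, D_mul, D_mul] at hcontra
    have hNnormal : star N * N = N * star N := by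
      rw [star_eq_adjoint]
      ext y
      have h1 := ContinuousLinearMap.ext_iff.mp hcontra ((WithLp.equiv 2 (H × H)).symm (0, y))
      have h2 := congrArg (fun z => (WithLp.equiv 2 (H × H) z).2) h1
      simpa [D_apply] using h2
    have hz : ‖N‖ ^ 2 = 0 := by rw [← norm_sq_of_normal N hNnormal, hN, norm_zero]
    exact hN0 (norm_eq_zero.mp (by nlinarith [norm_nonneg N]))
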